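/- In the restricted Block Relocation Problem, for every initial yard and every feasible solution, the total number of reshuffle moves equals Σ_{i=1}^n a_i, where a_i is the number of blocks located above block i in its stack at the first moment at which i is the minimum block present in the yard. -/

import Mathlib

/-- A state of the yard: each of the `w` stacks is a list of blocks, **ordered from top to
bottom** (the head of the list is the topmost block of the stack). -/
abbrev YState (w : ℕ) := Fin w → List ℕ

/-- A move of the Block Relocation Problem: either a reshuffle from stack `src` to stack
`dst`, or the retrieval of the topmost block of stack `src`. -/
inductive BMove (w : ℕ) : Type
  | reshuffle (src dst : Fin w) : BMove w
  | retrieval (src : Fin w) : BMove w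

/-- Whether a move is a reshuffle. -/
def BMove.isReshuffle {w : ℕ} : BMove w → Bool
  | .reshuffle _ _ => true
  | .retrieval _ => false

/-- Transition relation of the (unrestricted) BRP with stacks of height `h`:
a reshuffle moves the topmost block of a non-empty stack `src` on top of a different stack
`dst` of current height `< h`; a retrieval removes the topmost block of `src`, provided it
is the minimum block still present in the yard. -/
inductive BStep {w : ℕ} (h : ℕ) : YState w → BMove w → YState w → Prop
  | reshuffle {S : YState w} (src dst : Fin w) (x : ℕ) (t : List ℕ)
      (hsrc : S src = x :: t) (hne : src ≠ dst) (hcap : (S dst).length < h) :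
      BStep h S (.reshuffle src dst)
        (Function.update (Function.update S src t) dst (x :: S dst))
  | retrieval {S : YState w} (src : Fin w) (r : ℕ) (t : List ℕ)
      (hsrc : S src = r :: t) (hmin : ∀ j, ∀ y ∈ S j, r ≤ y) :
      BStep h S (.retrieval src) (Function.update S src t)

/-- Transition relation of the **restricted** BRP: as `BStep`, but a reshuffle is allowed
only for a block lying, in its stack, above the minimum block `r` still present in the
yard. -/
inductive RStep {w : ℕ} (h : ℕ) : YState w → BMove w → YState w → Prop
  | reshuffle {S : YState w} (src dst : Fin w) (x : ℕ) (t : List ℕ) (r : ℕ)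
      (hsrc : S src = x :: t) (hne : src ≠ dst) (hcap : (S dst).length < h)
      (hr : r ∈ t) (hmin : ∀ j, ∀ y ∈ S j, r ≤ y) :
      RStep h S (.reshuffle src dst)
        (Function.update (Function.update S src t) dst (x :: S dst))
  | retrieval {S : YState w} (src : Fin w) (r : ℕ) (t : List ℕ)
      (hsrc : S src = r :: t) (hmin : ∀ j, ∀ y ∈ S j, r ≤ y) :
      RStep h S (.retrieval src) (Function.update S src t)

/-- `S` is a yard with stacks of height `h` on the blocks `{1, …, n}`: every stack has at
most `h` blocks, and every block `1, …, n` (and no other) occurs exactly once. -/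
def IsYard {w : ℕ} (h n : ℕ) (S : YState w) : Prop :=
  (∀ j, (S j).length ≤ h) ∧
    ∀ x : ℕ, (∑ j, (S j).count x) = if x ∈ Finset.Icc 1 n then 1 else 0

/-- Block `i` is the minimum block still present in the yard `S`. -/
def MinPresent {w : ℕ} (S : YState w) (i : ℕ) : Prop :=
  (∃ j, i ∈ S j) ∧ ∀ j, ∀ y ∈ S j, i ≤ y

/-- The number of blocks located above block `i` in its stack (stacks are listed from top
to bottom, so this is the position of `i` in its stack's list). -/
def numAbove {w : ℕ} (S : YState w) (i : ℕ) : ℕ :=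
  ∑ j, if i ∈ S j then ((S j).takeWhile fun y => y != i).length else 0

-- helpers
lemma sum_update_count {w : ℕ} (S : YState w) (a : Fin w) (l : List ℕ) (y : ℕ) :
    (∑ j, ((Function.update S a l) j).count y) + ((S a).count y)
      = (∑ j, ((S j).count y)) + l.count y := by
  classical
  have h1 : ∑ j, ((Function.update S a l) j).count y
      = ∑ j, Function.update (fun j => (S j).count y) a (l.count y) j :=
    Finset.sum_congr rfl (fun j _ => by
      by_cases hj : j = a <;> simp [hj, Function.update_apply])
  rw [h1, Finset.sum_update_of_mem (Finset.mem_univ a) (fun j => (S j).count y) (l.count y),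
    Finset.sum_eq_sum_sdiff_singleton_add (Finset.mem_univ a) (fun j => (S j).count y)]
  omega

lemma pair_le_sum {w : ℕ} (f : Fin w → ℕ) {a b : Fin w} (hab : a ≠ b) :
    f a + f b ≤ ∑ j, f j := by
  classical
  calc f a + f b = ∑ j ∈ ({a, b} : Finset (Fin w)), f j := (Finset.sum_pair hab).symm
  _ ≤ ∑ j, f j := Finset.sum_le_sum_of_subset (Finset.subset_univ _)

lemma one_le_count {x : ℕ} {l : List ℕ} (hx : x ∈ l) : 1 ≤ l.count x :=
  Nat.one_le_iff_ne_zero.mpr (fun h => (List.count_eq_zero.mp h) hx)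

lemma count_le_total {w : ℕ} (S : YState w) (j : Fin w) (x : ℕ) :
    (S j).count x ≤ ∑ i, (S i).count x :=
  Finset.single_le_sum (f := fun i => (S i).count x) (fun _ _ => Nat.zero_le _) (Finset.mem_univ j)

lemma mem_Icc_of_counts {w m n : ℕ} {S : YState w}
    (hc : ∀ x, (∑ j, ((S j).count x)) = if x ∈ Finset.Icc m n then 1 else 0)
    {j : Fin w} {y : ℕ} (hy : y ∈ S j) : m ≤ y ∧ y ≤ n := by
  have h1 := one_le_count hy
  have h2 := count_le_total S j y
  rw [hc y] at h2
  simp only [Finset.mem_Icc] at h2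
  split_ifs at h2 with hh
  · exact hh
  · omega

lemma exists_mem_of_counts {w m n : ℕ} {S : YState w}
    (hc : ∀ x, (∑ j, ((S j).count x)) = if x ∈ Finset.Icc m n then 1 else 0)
    (hmn : m ≤ n) : ∃ j, m ∈ S j := by
  by_contra hcon
  push_neg at hcon
  have h0 : (∑ j, ((S j).count m)) = 0 :=
    Finset.sum_eq_zero fun j _ => List.count_eq_zero.mpr (hcon j)
  rw [hc m, if_pos (by simp [Finset.mem_Icc, hmn])] at h0
  omega

lemma counts_unique {w m n : ℕ} {S : YState w}
    (hc : ∀ x, (∑ j, ((S j).count x)) = if x ∈ Finset.Icc m n then 1 else 0)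
    {x : ℕ} {a b : Fin w} (hab : a ≠ b) (hxa : x ∈ S a) : x ∉ S b := by
  intro hxb
  have h1 := one_le_count hxa
  have h2 := one_le_count hxb
  have h3 : (S a).count x + (S b).count x ≤ ∑ j, (S j).count x :=
    pair_le_sum (fun j => (S j).count x) hab
  rw [hc x] at h3
  split_ifs at h3 <;> omega

lemma minPresent_of_counts {w m n : ℕ} {S : YState w}
    (hc : ∀ x, (∑ j, ((S j).count x)) = if x ∈ Finset.Icc m n then 1 else 0)
    (hmn : m ≤ n) : MinPresent S m :=
  ⟨exists_mem_of_counts hc hmn, fun j y hy => (mem_Icc_of_counts hc hy).1⟩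

lemma rstep_cases {w h : ℕ} {S S' : YState w} {m : BMove w} (hs : RStep h S m S') :
    (∃ src dst x t r, m = .reshuffle src dst ∧ S src = x :: t ∧ src ≠ dst ∧ r ∈ t ∧
        (∀ j, ∀ y ∈ S j, r ≤ y) ∧
        S' = Function.update (Function.update S src t) dst (x :: S dst))
    ∨ (∃ src r t, m = .retrieval src ∧ S src = r :: t ∧ (∀ j, ∀ y ∈ S j, r ≤ y) ∧
        S' = Function.update S src t) := by
  cases hs with
  | reshuffle src dst x t r hsrc hne hcap hr hmin =>
      exact Or.inl ⟨src, dst, x, t, r, rfl, hsrc, hne, hr, hmin, rfl⟩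
  | retrieval src r t hsrc hmin =>
      exact Or.inr ⟨src, r, t, rfl, hsrc, hmin, rfl⟩

lemma main_aux {w h n K : ℕ} (S : ℕ → YState w) (mv : ℕ → BMove w) (τ : ℕ → ℕ)
    (hstep : ∀ t < K, RStep h (S t) (mv t) (S (t + 1)))
    (hend : ∀ j, S K j = [])
    (hτ : ∀ i ∈ Finset.Icc 1 n,
      τ i ≤ K ∧ MinPresent (S (τ i)) i ∧ ∀ t < τ i, ¬ MinPresent (S t) i) :
    ∀ d t m, K ≤ t + d → t ≤ K → 1 ≤ m →
      (∀ x, (∑ j, ((S t) j).count x) = if x ∈ Finset.Icc m n then 1 else 0) →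
      (∀ t' < t, ∃ j y, y ∈ S t' j ∧ y ≤ m) →
      ((List.range' t (K - t)).filter fun s => (mv s).isReshuffle).length =
        (if m ≤ n then numAbove (S t) m else 0) +
          ∑ i ∈ Finset.Icc (m + 1) n, numAbove (S (τ i)) i := by
  intro d
  induction d with
  | zero =>
    intro t m hfuel htK hm hc _hprev
    have htK' : t = K := by omega
    subst htK'
    have hnm : n < m := by
      by_contra hle
      push_neg at hle
      have h1 := hc m
      rw [if_pos (by simp [Finset.mem_Icc]; omega)] at h1
      simp [hend] at h1
    have hIcc : Finset.Icc (m + 1) n = ∅ := Finset.Icc_eq_empty (by omega)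
    simp [hIcc, Nat.sub_self, if_neg (by omega : ¬ m ≤ n)]
  | succ d ih =>
    intro t m hfuel htK hm hc hprev
    by_cases ht : t < K
    · rcases rstep_cases (hstep t ht) with
        ⟨src, dst, x, tl, r, hmv, hsrc, hne, hr, hmin, hS'⟩ |
        ⟨src, r, tl, hmv, hsrc, hmin, hS'⟩
      · -- reshuffle case
        have hrmem : r ∈ S t src := by rw [hsrc]; exact List.mem_cons_of_mem _ hr
        have hrIcc := mem_Icc_of_counts hc hrmem
        have hmn' : m ≤ n := le_trans hrIcc.1 hrIcc.2
        obtain ⟨j0, hj0⟩ := exists_mem_of_counts hc hmn'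
        have hrm : r = m := le_antisymm (hmin j0 m hj0) hrIcc.1
        subst hrm
        -- from here on, the current minimum is named `r`
        have hmn : r ≤ n := hmn'
        have hmsrc : r ∈ S t src := hrmem
        have honly : ∀ j, j ≠ src → r ∉ S t j := fun j hj =>
          counts_unique hc (Ne.symm hj) hmsrc
        have hxm : x ≠ r := by
          intro hx
          subst hx
          have hc1 : (S t src).count x ≤ 1 := by
            have h2 := count_le_total (S t) src x
            rw [hc x] at h2
            split_ifs at h2 <;> omega
          rw [hsrc] at hc1
          have h3 := one_le_count hr
          simp [List.count_cons] at hc1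
          omega
        have hSsrc' : S (t + 1) src = tl := by
          rw [hS', Function.update_of_ne hne, Function.update_self]
        have hSdst' : S (t + 1) dst = x :: S t dst := by
          rw [hS', Function.update_self]
        have hSoth : ∀ j, j ≠ src → j ≠ dst → S (t + 1) j = S t j := by
          intro j hjs hjd
          rw [hS', Function.update_of_ne hjd, Function.update_of_ne hjs]
        have hnum_t : numAbove (S t) r = (tl.takeWhile fun y => y != r).length + 1 := by
          unfold numAbove
          rw [Finset.sum_eq_single_of_mem src (Finset.mem_univ src)]
          · rw [if_pos hmsrc, hsrc, List.takeWhile_cons, if_pos (bne_iff_ne.mpr hxm)]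
            simp
          · intro j _ hj
            rw [if_neg (honly j hj)]
        have hnum_t1 : numAbove (S (t + 1)) r = (tl.takeWhile fun y => y != r).length := by
          unfold numAbove
          rw [Finset.sum_eq_single_of_mem src (Finset.mem_univ src)]
          · rw [if_pos (by rw [hSsrc']; exact hr), hSsrc']
          · intro j _ hj
            by_cases hjd : j = dst
            · rw [if_neg]
              rw [hjd, hSdst']
              intro hmem
              rcases List.mem_cons.mp hmem with h1 | h2
              · exact hxm h1.symm
              · exact honly dst (Ne.symm hne) h2
            · rw [if_neg (by rw [hSoth j hj hjd]; exact honly j hj)]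
        have hc' : ∀ y, (∑ j, ((S (t + 1)) j).count y)
            = if y ∈ Finset.Icc r n then 1 else 0 := by
          intro y
          have e1 := sum_update_count (S t) src tl y
          have e2 := sum_update_count (Function.update (S t) src tl) dst (x :: S t dst) y
          have hTdst : (Function.update (S t) src tl) dst = S t dst :=
            Function.update_of_ne (Ne.symm hne) _ _
          rw [hTdst, ← hS'] at e2
          have hcy := hc y
          have hcount_src : (S t src).count y = tl.count y + (if x = y then 1 else 0) := by
            rw [hsrc, List.count_cons]
            simp [beq_iff_eq]
          have hcount_l : (x :: S t dst).count y
              = (S t dst).count y + (if x = y then 1 else 0) := by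
            rw [List.count_cons]
            simp [beq_iff_eq]
          rw [hcy] at e1
          split_ifs at e1 hcount_src hcount_l ⊢ <;> omega
        have hprev' : ∀ t' < t + 1, ∃ j y, y ∈ S t' j ∧ y ≤ r := by
          intro t' ht'
          rcases Nat.lt_or_ge t' t with h1 | h1
          · exact hprev t' h1
          · have hteq : t' = t := by omega
            subst hteq
            exact ⟨src, r, hmsrc, le_refl r⟩
        have ihr := ih (t + 1) r (by omega) (by omega) hm hc' hprev'
        have hKt : K - t = (K - (t + 1)) + 1 := by omega
        rw [hKt, List.range'_succ, List.filter_cons]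
        rw [if_pos (by rw [hmv]; rfl)]
        simp only [List.length_cons]
        rw [ihr, if_pos hmn, if_pos hmn, hnum_t, hnum_t1]
        omega
      · -- retrieval case
        have hrmem : r ∈ S t src := by rw [hsrc]; exact List.mem_cons_self
        have hrIcc := mem_Icc_of_counts hc hrmem
        have hmn' : m ≤ n := le_trans hrIcc.1 hrIcc.2
        obtain ⟨j0, hj0⟩ := exists_mem_of_counts hc hmn'
        have hrm : r = m := le_antisymm (hmin j0 m hj0) hrIcc.1
        subst hrm
        have hmn : r ≤ n := hmn'
        have honly : ∀ j, j ≠ src → r ∉ S t j := fun j hj =>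
          counts_unique hc (Ne.symm hj) hrmem
        have hnum_t : numAbove (S t) r = 0 := by
          unfold numAbove
          apply Finset.sum_eq_zero
          intro j _
          by_cases hjs : j = src
          · subst hjs
            rw [if_pos hrmem, hsrc, List.takeWhile_cons, if_neg (by simp)]
            rfl
          · rw [if_neg (honly j hjs)]
        have hc' : ∀ y, (∑ j, ((S (t + 1)) j).count y)
            = if y ∈ Finset.Icc (r + 1) n then 1 else 0 := by
          intro y
          have e1 := sum_update_count (S t) src tl y
          rw [← hS'] at e1
          have hcy := hc y
          have hcount_src : (S t src).count y = tl.count y + (if r = y then 1 else 0) := by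
            rw [hsrc, List.count_cons]
            simp [beq_iff_eq]
          rw [hcy, hcount_src] at e1
          simp only [Finset.mem_Icc] at e1 ⊢
          split_ifs at e1 ⊢ <;> omega
        have hprev0 : ∀ t' < t + 1, ∃ j y, y ∈ S t' j ∧ y ≤ r := by
          intro t' ht'
          rcases Nat.lt_or_ge t' t with h1 | h1
          · exact hprev t' h1
          · have hteq : t' = t := by omega
            subst hteq
            exact ⟨src, r, hrmem, le_refl r⟩
        have hprev' : ∀ t' < t + 1, ∃ j y, y ∈ S t' j ∧ y ≤ r + 1 := by
          intro t' ht'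
          obtain ⟨j, y, hy, hym⟩ := hprev0 t' ht'
          exact ⟨j, y, hy, by omega⟩
        have ihr := ih (t + 1) (r + 1) (by omega) (by omega) (by omega) hc' hprev'
        have hsplit : ∑ i ∈ Finset.Icc (r + 1) n, numAbove (S (τ i)) i
            = (if r + 1 ≤ n then numAbove (S (t + 1)) (r + 1) else 0)
              + ∑ i ∈ Finset.Icc (r + 1 + 1) n, numAbove (S (τ i)) i := by
          by_cases hm1 : r + 1 ≤ n
          · have hIcc : Finset.Icc (r + 1) n = insert (r + 1) (Finset.Icc (r + 1 + 1) n) := by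
              ext z
              simp only [Finset.mem_Icc, Finset.mem_insert]
              omega
            rw [hIcc, Finset.sum_insert (by simp [Finset.mem_Icc])]
            have hmin1 : MinPresent (S (t + 1)) (r + 1) := minPresent_of_counts hc' hm1
            have hnot : ∀ t' < t + 1, ¬ MinPresent (S t') (r + 1) := by
              intro t' ht' hMP
              obtain ⟨j, y, hy, hym⟩ := hprev0 t' ht'
              have := hMP.2 j y hy
              omega
            have hτeq : τ (r + 1) = t + 1 := by
              obtain ⟨hτK, hτmin, hτfirst⟩ := hτ (r + 1) (by simp [Finset.mem_Icc]; omega)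
              rcases lt_trichotomy (τ (r + 1)) (t + 1) with hlt | heq | hgt
              · exact absurd hτmin (hnot _ hlt)
              · exact heq
              · exact absurd hmin1 (hτfirst _ hgt)
            rw [if_pos hm1, hτeq]
          · have h1 : Finset.Icc (r + 1) n = ∅ := Finset.Icc_eq_empty (by omega)
            have h2 : Finset.Icc (r + 1 + 1) n = ∅ := Finset.Icc_eq_empty (by omega)
            simp [h1, h2, hm1]
        have hKt : K - t = (K - (t + 1)) + 1 := by omega
        rw [hKt, List.range'_succ, List.filter_cons]
        rw [if_neg (by rw [hmv]; simp [BMove.isReshuffle])]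
        rw [ihr, hsplit, if_pos hmn, hnum_t]
        omega
    · have htK' : t = K := by omega
      subst htK'
      have hnm : n < m := by
        by_contra hle
        push_neg at hle
        have h1 := hc m
        rw [if_pos (by simp [Finset.mem_Icc]; omega)] at h1
        simp [hend] at h1
      have hIcc : Finset.Icc (m + 1) n = ∅ := Finset.Icc_eq_empty (by omega)
      simp [hIcc, Nat.sub_self, if_neg (by omega : ¬ m ≤ n)]

/-- In the restricted BRP, for every feasible solution (a sequence of
states `S 0, …, S K` connected by legal restricted moves and ending in the empty yard),
the total number of reshuffles equals `∑ i, a i`, where `a i` is the number of blocks above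
block `i` at the first time `τ i` at which `i` is the minimum block present. -/
theorem restricted_reshuffles_eq {w h n K : ℕ} (S : ℕ → YState w) (mv : ℕ → BMove w)
    (τ : ℕ → ℕ)
    (hyard : IsYard h n (S 0))
    (hstep : ∀ t < K, RStep h (S t) (mv t) (S (t + 1)))
    (hend : ∀ j, S K j = [])
    (hτ : ∀ i ∈ Finset.Icc 1 n,
      τ i ≤ K ∧ MinPresent (S (τ i)) i ∧ ∀ t < τ i, ¬ MinPresent (S t) i) :
    ((List.range K).filter fun t => (mv t).isReshuffle).length =
      ∑ i ∈ Finset.Icc 1 n, numAbove (S (τ i)) i := by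
  obtain ⟨-, hc⟩ := hyard
  have hmain := main_aux S mv τ hstep hend hτ K 0 1 (by omega) (by omega) (le_refl 1) hc
    (fun t' h' => absurd h' (Nat.not_lt_zero t'))
  rw [Nat.sub_zero] at hmain
  rw [List.range_eq_range', hmain]
  by_cases h1n : 1 ≤ n
  · have hIcc : Finset.Icc 1 n = insert 1 (Finset.Icc (1 + 1) n) := by
      ext z
      simp only [Finset.mem_Icc, Finset.mem_insert]
      omega
    rw [hIcc, Finset.sum_insert (by simp [Finset.mem_Icc])]
    have hmin0 : MinPresent (S 0) 1 := minPresent_of_counts hc h1n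
    have hτeq : τ 1 = 0 := by
      obtain ⟨hτK, hτmin, hτfirst⟩ := hτ 1 (by simp [Finset.mem_Icc, h1n])
      rcases Nat.eq_zero_or_pos (τ 1) with h0 | h0
      · exact h0
      · exact absurd hmin0 (hτfirst 0 h0)
    rw [if_pos h1n, hτeq]
  · have h1 : Finset.Icc 1 n = ∅ := Finset.Icc_eq_empty (by omega)
    have h2 : Finset.Icc (1 + 1) n = ∅ := Finset.Icc_eq_empty (by omega)
    simp [h1, h2, h1n]
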